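/- Let D be a contractive distance on two-qubit density matrices. Let c1, c3 ∈ [-1,1] and let x be a real number with c1 + x ∈ [-1,1]. Then D(ρ(c1,-c1·c3,c3), ρ(c1,0,0)) ≤ D(ρ(c1,-c1·c3,c3), ρ(c1+x,0,0)). That is, among BD classical states on the c1-axis, the closest one to the freezing-surface state ρ(c1,-c1·c3,c3) is its orthogonal projection ρ(c1,0,0). -/

import Mathlib

open Matrix Kronecker
open scoped ComplexOrder

noncomputable section

/-- 2×2 complex matrices (single-qubit operators). -/
abbrev Mat2 := Matrix (Fin 2) (Fin 2) ℂ

/-- 4×4 complex matrices (two-qubit operators), indexed by `Fin 2 × Fin 2`. -/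
abbrev Mat4 := Matrix (Fin 2 × Fin 2) (Fin 2 × Fin 2) ℂ

/-- Pauli matrix σ₁ (x). -/
def σ1 : Mat2 := !![0, 1; 1, 0]

/-- Pauli matrix σ₂ (y). -/
def σ2 : Mat2 := !![0, -Complex.I; Complex.I, 0]

/-- Pauli matrix σ₃ (z). -/
def σ3 : Mat2 := !![1, 0; 0, -1]

/-- The Bell-diagonal state ρ(c1,c2,c3) = (1/4)(I₄ + c1 σ₁⊗σ₁ + c2 σ₂⊗σ₂ + c3 σ₃⊗σ₃). -/
def BD (c1 c2 c3 : ℝ) : Mat4 :=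
  (1 / 4 : ℂ) • ((1 : Mat4) + (c1 : ℂ) • (σ1 ⊗ₖ σ1) + (c2 : ℂ) • (σ2 ⊗ₖ σ2)
    + (c3 : ℂ) • (σ3 ⊗ₖ σ3))

/-- A two-qubit density matrix: positive semidefinite with unit trace. -/
def IsDensityMatrix (ρ : Mat4) : Prop := ρ.PosSemidef ∧ ρ.trace = 1

/-- A CPTP map given by finitely many Kraus operators. -/
def IsCPTP (Λ : Mat4 → Mat4) : Prop :=
  ∃ (n : ℕ) (K : Fin n → Mat4),
    (∑ i, (K i)ᴴ * K i) = 1 ∧ ∀ X, Λ X = ∑ i, K i * X * (K i)ᴴ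

/-- A distance `D` is contractive if it contracts under every CPTP map. -/
def Contractive (D : Mat4 → Mat4 → ℝ) : Prop :=
  ∀ Λ : Mat4 → Mat4, IsCPTP Λ → ∀ ρ σ : Mat4,
    IsDensityMatrix ρ → IsDensityMatrix σ → D (Λ ρ) (Λ σ) ≤ D ρ σ

/-- A distance `D` is invariant under transposition. -/
def TransposeInvariant (D : Mat4 → Mat4 → ℝ) : Prop :=
  ∀ ρ σ : Mat4, IsDensityMatrix ρ → IsDensityMatrix σ → D ρᵀ σᵀ = D ρ σ

/-- A distance `D` is jointly convex. -/
def JointlyConvex (D : Mat4 → Mat4 → ℝ) : Prop :=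
  ∀ q : ℝ, 0 ≤ q → q ≤ 1 → ∀ ρ σ τ ς : Mat4,
    IsDensityMatrix ρ → IsDensityMatrix σ → IsDensityMatrix τ → IsDensityMatrix ς →
    D (q • ρ + (1 - q) • σ) (q • τ + (1 - q) • ς) ≤ q * D ρ τ + (1 - q) * D σ ς

/-- A classical-classical two-qubit state: ∑ᵢⱼ pᵢⱼ |aᵢ⟩⟨aᵢ| ⊗ |bⱼ⟩⟨bⱼ| with (pᵢⱼ) a
probability distribution and {aᵢ}, {bⱼ} orthonormal bases of ℂ². -/
def IsClassical (χ : Mat4) : Prop :=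
  ∃ (p : Fin 2 → Fin 2 → ℝ) (a b : Fin 2 → Fin 2 → ℂ),
    (∀ i j, 0 ≤ p i j) ∧ (∑ i, ∑ j, p i j = 1) ∧
    (∀ i i', ∑ k, (starRingEnd ℂ) (a i k) * a i' k = if i = i' then 1 else 0) ∧
    (∀ j j', ∑ k, (starRingEnd ℂ) (b j k) * b j' k = if j = j' then 1 else 0) ∧
    χ = ∑ i, ∑ j, (p i j : ℂ) •
      (Matrix.vecMulVec (a i) (star (a i)) ⊗ₖ Matrix.vecMulVec (b j) (star (b j)))

/-- Membership in the tetrahedron of Bell-diagonal states. -/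
def InTetra (c : ℝ × ℝ × ℝ) : Prop :=
  c ∈ convexHull ℝ
    ({((1 : ℝ), (-1 : ℝ), (1 : ℝ)), ((-1 : ℝ), (1 : ℝ), (1 : ℝ)),
      ((1 : ℝ), (1 : ℝ), (-1 : ℝ)), ((-1 : ℝ), (-1 : ℝ), (-1 : ℝ))} : Set (ℝ × ℝ × ℝ))

/-- Geometric discord: distance to the set of classical states. -/
def QD (D : Mat4 → Mat4 → ℝ) (ρ : Mat4) : ℝ :=
  sInf {x : ℝ | ∃ χ : Mat4, IsClassical χ ∧ x = D ρ χ}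

/-- The Pauli matrices, indexed. -/
def pauli : Fin 3 → Mat2 := ![σ1, σ2, σ3]

-- 2x2 product table
lemma s11 : σ1 * σ1 = 1 := by
  ext i j; fin_cases i <;> fin_cases j <;>
    simp [σ1, Matrix.mul_apply, Fin.sum_univ_two, Matrix.one_apply]
lemma s22 : σ2 * σ2 = 1 := by
  ext i j; fin_cases i <;> fin_cases j <;>
    simp [σ2, Matrix.mul_apply, Fin.sum_univ_two, Matrix.one_apply]
lemma s33 : σ3 * σ3 = 1 := by
  ext i j; fin_cases i <;> fin_cases j <;>
    simp [σ3, Matrix.mul_apply, Fin.sum_univ_two, Matrix.one_apply]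
lemma s12 : σ1 * σ2 = Complex.I • σ3 := by
  ext i j; fin_cases i <;> fin_cases j <;>
    simp [σ1, σ2, σ3, Matrix.mul_apply, Fin.sum_univ_two]
lemma s21 : σ2 * σ1 = -Complex.I • σ3 := by
  ext i j; fin_cases i <;> fin_cases j <;>
    simp [σ1, σ2, σ3, Matrix.mul_apply, Fin.sum_univ_two]
lemma s13 : σ1 * σ3 = -Complex.I • σ2 := by
  ext i j; fin_cases i <;> fin_cases j <;>
    simp [σ1, σ2, σ3, Matrix.mul_apply, Fin.sum_univ_two]
lemma s31 : σ3 * σ1 = Complex.I • σ2 := by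
  ext i j; fin_cases i <;> fin_cases j <;>
    simp [σ1, σ2, σ3, Matrix.mul_apply, Fin.sum_univ_two]
lemma s23 : σ2 * σ3 = Complex.I • σ1 := by
  ext i j; fin_cases i <;> fin_cases j <;>
    simp [σ1, σ2, σ3, Matrix.mul_apply, Fin.sum_univ_two]
lemma s32 : σ3 * σ2 = -Complex.I • σ1 := by
  ext i j; fin_cases i <;> fin_cases j <;>
    simp [σ1, σ2, σ3, Matrix.mul_apply, Fin.sum_univ_two]
lemma s1H : σ1ᴴ = σ1 := by
  ext i j; fin_cases i <;> fin_cases j <;> simp [σ1, Matrix.conjTranspose_apply]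
lemma s3H : σ3ᴴ = σ3 := by
  ext i j; fin_cases i <;> fin_cases j <;> simp [σ3, Matrix.conjTranspose_apply]

def PX : Mat4 := σ1 ⊗ₖ σ1
def PY : Mat4 := σ2 ⊗ₖ σ2
def PZ : Mat4 := σ3 ⊗ₖ σ3
def PW : Mat4 := σ3 ⊗ₖ (1 : Mat2)

lemma smulk (r s : ℂ) (A B : Mat2) : (r • A) ⊗ₖ (s • B) = (r * s) • (A ⊗ₖ B) := by
  rw [Matrix.smul_kronecker, Matrix.kronecker_smul, smul_smul]

-- bare product rules
lemma bXX : PX * PX = 1 := by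
  rw [PX, ← Matrix.mul_kronecker_mul, s11, Matrix.one_kronecker_one]
lemma bYY : PY * PY = 1 := by
  rw [PY, ← Matrix.mul_kronecker_mul, s22, Matrix.one_kronecker_one]
lemma bZZ : PZ * PZ = 1 := by
  rw [PZ, ← Matrix.mul_kronecker_mul, s33, Matrix.one_kronecker_one]
lemma bXY : PX * PY = -PZ := by
  rw [PX, PY, PZ, ← Matrix.mul_kronecker_mul, s12, smulk]
  simp [Complex.I_mul_I]
lemma bYX : PY * PX = -PZ := by
  rw [PX, PY, PZ, ← Matrix.mul_kronecker_mul, s21, smulk]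
  simp [Complex.I_mul_I]
lemma bXZ : PX * PZ = -PY := by
  rw [PX, PY, PZ, ← Matrix.mul_kronecker_mul, s13, smulk]
  simp [Complex.I_mul_I]
lemma bZX : PZ * PX = -PY := by
  rw [PX, PY, PZ, ← Matrix.mul_kronecker_mul, s31, smulk]
  simp [Complex.I_mul_I]
lemma bYZ : PY * PZ = -PX := by
  rw [PX, PY, PZ, ← Matrix.mul_kronecker_mul, s23, smulk]
  simp [Complex.I_mul_I]
lemma bZY : PZ * PY = -PX := by
  rw [PX, PY, PZ, ← Matrix.mul_kronecker_mul, s32, smulk]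
  simp [Complex.I_mul_I]
lemma bWW : PW * PW = 1 := by
  rw [PW, ← Matrix.mul_kronecker_mul, s33, Matrix.one_mul, Matrix.one_kronecker_one]
lemma bXW : PX * PW = -(PW * PX) := by
  rw [PX, PW, ← Matrix.mul_kronecker_mul, ← Matrix.mul_kronecker_mul, s13, s31, mul_one, one_mul,
    Matrix.smul_kronecker, Matrix.smul_kronecker]
  simp
lemma bYW : PY * PW = -(PW * PY) := by
  rw [PY, PW, ← Matrix.mul_kronecker_mul, ← Matrix.mul_kronecker_mul, s23, s32, mul_one, one_mul,
    Matrix.smul_kronecker, Matrix.smul_kronecker]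
  simp
lemma bZW : PZ * PW = PW * PZ := by
  rw [PZ, PW, ← Matrix.mul_kronecker_mul, ← Matrix.mul_kronecker_mul, mul_one, one_mul]

-- generalized (right-assoc) rules
lemma gXX (M : Mat4) : PX * (PX * M) = M := by rw [← mul_assoc, bXX, one_mul]
lemma gYY (M : Mat4) : PY * (PY * M) = M := by rw [← mul_assoc, bYY, one_mul]
lemma gZZ (M : Mat4) : PZ * (PZ * M) = M := by rw [← mul_assoc, bZZ, one_mul]
lemma gWW (M : Mat4) : PW * (PW * M) = M := by rw [← mul_assoc, bWW, one_mul]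
lemma gXY (M : Mat4) : PX * (PY * M) = -(PZ * M) := by rw [← mul_assoc, bXY, neg_mul]
lemma gYX (M : Mat4) : PY * (PX * M) = -(PZ * M) := by rw [← mul_assoc, bYX, neg_mul]
lemma gXZ (M : Mat4) : PX * (PZ * M) = -(PY * M) := by rw [← mul_assoc, bXZ, neg_mul]
lemma gZX (M : Mat4) : PZ * (PX * M) = -(PY * M) := by rw [← mul_assoc, bZX, neg_mul]
lemma gYZ (M : Mat4) : PY * (PZ * M) = -(PX * M) := by rw [← mul_assoc, bYZ, neg_mul]
lemma gZY (M : Mat4) : PZ * (PY * M) = -(PX * M) := by rw [← mul_assoc, bZY, neg_mul]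
lemma gXW (M : Mat4) : PX * (PW * M) = -(PW * (PX * M)) := by
  rw [← mul_assoc, bXW, neg_mul, mul_assoc]
lemma gYW (M : Mat4) : PY * (PW * M) = -(PW * (PY * M)) := by
  rw [← mul_assoc, bYW, neg_mul, mul_assoc]
lemma gZW (M : Mat4) : PZ * (PW * M) = PW * (PZ * M) := by
  rw [← mul_assoc, bZW, mul_assoc]

lemma kronCT (A B : Mat2) : (A ⊗ₖ B)ᴴ = Aᴴ ⊗ₖ Bᴴ := by
  ext ⟨i,j⟩ ⟨k,l⟩
  simp [Matrix.conjTranspose_apply, Matrix.kroneckerMap_apply, star_mul']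

lemma PXH : PXᴴ = PX := by rw [PX, kronCT, s1H]
lemma PWH : PWᴴ = PW := by rw [PW, kronCT, s3H, Matrix.conjTranspose_one]

def E (u v w z : ℂ) : Mat4 := (1/4 : ℂ) • (u • (1 : Mat4) + v • PX + w • PY + z • PZ)

def Qp : Mat4 := (1/2 : ℂ) • ((1 : Mat4) + PX)
def Qm : Mat4 := (1/2 : ℂ) • ((1 : Mat4) - PX)

lemma QpH : Qpᴴ = Qp := by
  simp [Qp, Matrix.conjTranspose_smul, PXH]
lemma QmH : Qmᴴ = Qm := by
  simp [Qm, Matrix.conjTranspose_smul, PXH]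

lemma R1 (u v w z : ℂ) : Qp * (E u v w z * Qp) = (1/2 : ℂ) • (E u v w z + E v u (-z) (-w)) := by
  simp only [Qp, E, smul_mul_assoc, mul_smul_comm, add_mul, mul_add, sub_mul, mul_sub,
    mul_one, one_mul, mul_neg, neg_mul, smul_smul, smul_add, smul_sub, smul_neg,
    gXX, gXY, gXZ, gYX, gZX, gWW, bXX, bXY, bXZ, bYX, bZX]
  module

lemma R3 (u v w z : ℂ) : Qm * (E u v w z * Qm) = (1/2 : ℂ) • (E u v w z - E v u (-z) (-w)) := by
  simp only [Qp, Qm, E, smul_mul_assoc, mul_smul_comm, add_mul, mul_add, sub_mul, mul_sub,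
    mul_one, one_mul, mul_neg, neg_mul, smul_smul, smul_add, smul_sub, smul_neg,
    gXX, gXY, gXZ, gYX, gZX, gWW, bXX, bXY, bXZ, bYX, bZX]
  module

lemma R2 (u v w z : ℂ) : PW * (Qm * (E u v w z * (Qm * PW)))
    = (1/2 : ℂ) • (E u (-v) (-w) z - E v (-u) z (-w)) := by
  simp only [Qm, E, smul_mul_assoc, mul_smul_comm, add_mul, mul_add, sub_mul, mul_sub,
    mul_one, one_mul, mul_neg, neg_mul, neg_neg, smul_smul, smul_add, smul_sub, smul_neg,
    gXX, gXY, gXZ, gYX, gZX, gYY, gZZ, gYZ, gZY, gWW, gXW, gYW, gZW,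
    bXX, bXY, bXZ, bYX, bZX, bYY, bZZ, bYZ, bZY, bWW, bXW, bYW, bZW]
  module

lemma R4 (u v w z : ℂ) : PW * (Qp * (E u v w z * (Qp * PW)))
    = (1/2 : ℂ) • (E u (-v) (-w) z + E v (-u) z (-w)) := by
  simp only [Qp, E, smul_mul_assoc, mul_smul_comm, add_mul, mul_add, sub_mul, mul_sub,
    mul_one, one_mul, mul_neg, neg_mul, neg_neg, smul_smul, smul_add, smul_sub, smul_neg,
    gXX, gXY, gXZ, gYX, gZX, gYY, gZZ, gYZ, gZY, gWW, gXW, gYW, gZW,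
    bXX, bXY, bXZ, bYX, bZX, bYY, bZZ, bYZ, bZY, bWW, bXW, bYW, bZW]
  module

lemma QpQp : Qp * Qp = Qp := by
  simp only [Qp, smul_mul_assoc, mul_smul_comm, add_mul, mul_add, mul_one, one_mul,
    smul_smul, bXX]
  module

lemma QmQm : Qm * Qm = Qm := by
  simp only [Qm, smul_mul_assoc, mul_smul_comm, sub_mul, mul_sub, mul_one, one_mul,
    smul_smul, bXX]
  module

lemma sandwichQm : (Qm * PW) * (PW * Qm) = Qm := by
  rw [mul_assoc, gWW, QmQm]

lemma sandwichQp : (Qp * PW) * (PW * Qp) = Qp := by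
  rw [mul_assoc, gWW, QpQp]

lemma QpQm1 : Qp + Qm = 1 := by
  simp only [Qp, Qm]
  module

def bv : Fin 4 → (Fin 2 × Fin 2 → ℂ) :=
  ![fun p => if p.1 = p.2 then 1 else 0,
    fun p => if p.1 = p.2 then (if p.1 = 0 then 1 else -1) else 0,
    fun p => if p.1 = p.2 then 0 else 1,
    fun p => if p.1 = p.2 then 0 else (if p.1 = 0 then 1 else -1)]

set_option maxHeartbeats 1000000 in
lemma BD_decomp (a b c : ℝ) : BD a b c =
    (((1+a-b+c)/8 : ℝ) : ℂ) • Matrix.vecMulVec (bv 0) (star (bv 0))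
    + (((1-a+b+c)/8 : ℝ) : ℂ) • Matrix.vecMulVec (bv 1) (star (bv 1))
    + (((1+a+b-c)/8 : ℝ) : ℂ) • Matrix.vecMulVec (bv 2) (star (bv 2))
    + (((1-a-b-c)/8 : ℝ) : ℂ) • Matrix.vecMulVec (bv 3) (star (bv 3)) := by
  ext ⟨i,j⟩ ⟨k,l⟩
  fin_cases i <;> fin_cases j <;> fin_cases k <;> fin_cases l <;>
    · try simp [BD, bv, σ1, σ2, σ3, Matrix.one_apply, Matrix.vecMulVec_apply, Prod.ext_iff]
      try norm_num [Complex.ext_iff] <;> ring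


lemma outer_psd (v : Fin 2 × Fin 2 → ℂ) : (Matrix.vecMulVec v (star v)).PosSemidef := by
  rw [Matrix.vecMulVec_eq Unit, ← Matrix.conjTranspose_replicateCol]
  exact Matrix.posSemidef_self_mul_conjTranspose _

lemma psd_ofReal_smul {M : Mat4} (hM : M.PosSemidef) {r : ℝ} (hr : 0 ≤ r) :
    ((r : ℂ) • M).PosSemidef := by
  constructor
  · have h1 := hM.1
    rw [Matrix.IsHermitian, Matrix.conjTranspose_smul, h1.eq]
    simp [Complex.conj_ofReal]
  · intro x
    exact (hM.smul (Complex.zero_le_real.mpr hr)).2 x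

lemma BD_psd (a b c : ℝ) (h1 : 0 ≤ 1+a-b+c) (h2 : 0 ≤ 1-a+b+c)
    (h3 : 0 ≤ 1+a+b-c) (h4 : 0 ≤ 1-a-b-c) : (BD a b c).PosSemidef := by
  rw [BD_decomp]
  refine (((psd_ofReal_smul (outer_psd _) (by linarith)).add
    (psd_ofReal_smul (outer_psd _) (by linarith))).add
    (psd_ofReal_smul (outer_psd _) (by linarith))).add
    (psd_ofReal_smul (outer_psd _) (by linarith))

lemma BD_eq_E (a b c : ℝ) : BD a b c = E 1 (a : ℂ) (b : ℂ) (c : ℂ) := by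
  simp only [BD, E, PX, PY, PZ, one_smul]

lemma BD_trace (a b c : ℝ) : (BD a b c).trace = 1 := by
  simp [BD, Matrix.trace, Matrix.diag, Fintype.sum_prod_type, σ1, σ2, σ3, Fin.sum_univ_two,
    Matrix.one_apply]
  ring

/-- The Kraus operators of the channel used in the proof. -/
def Kv (s t : ℝ) : Fin 4 → Mat4 :=
  ![(s : ℂ) • Qp, (s : ℂ) • (PW * Qm), (t : ℂ) • Qm, (t : ℂ) • (PW * Qp)]

lemma Kv_sum (s t : ℝ) (α : ℂ) (hs : (s : ℂ) * s = α) (ht : (t : ℂ) * t = 1 - α) :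
    (∑ i, (Kv s t i)ᴴ * Kv s t i) = 1 := by
  rw [Fin.sum_univ_four]
  simp only [Kv, Matrix.cons_val_zero, Matrix.cons_val_one, Matrix.head_cons,
    Matrix.cons_val_two, Matrix.cons_val_three, Matrix.cons_val_succ, Matrix.vecTail, Matrix.vecHead, Function.comp]
  simp only [Matrix.conjTranspose_smul, Matrix.conjTranspose_mul, QpH, QmH, PWH,
    Complex.star_def, Complex.conj_ofReal, smul_mul_assoc, mul_smul_comm, smul_smul]
  rw [hs, ht, QpQp, QmQm, sandwichQm, sandwichQp, ← QpQm1]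
  module

lemma Kv_apply (s t : ℝ) (α : ℂ) (hs : (s : ℂ) * s = α) (ht : (t : ℂ) * t = 1 - α)
    (a b c : ℂ) :
    (∑ i, Kv s t i * E 1 a b c * (Kv s t i)ᴴ)
      = E 1 (2*α-1) (-((2*α-1)*c)) c := by
  rw [Fin.sum_univ_four]
  simp only [Kv, Matrix.cons_val_zero, Matrix.cons_val_one, Matrix.head_cons,
    Matrix.cons_val_two, Matrix.cons_val_three, Matrix.cons_val_succ, Matrix.vecTail, Matrix.vecHead, Function.comp]
  simp only [Matrix.conjTranspose_smul, Matrix.conjTranspose_mul, QpH, QmH, PWH,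
    Complex.star_def, Complex.conj_ofReal, smul_mul_assoc, mul_smul_comm, smul_smul]
  simp only [mul_assoc]
  rw [hs, ht, R1, R2, R3, R4]
  simp only [E]
  module


/-- among BD classical states on the c1-axis, the closest one to
ρ(c1,-c1·c3,c3) is its orthogonal projection ρ(c1,0,0). -/
theorem closest_on_c1_axis_is_projection
    (D : Mat4 → Mat4 → ℝ) (hD : Contractive D)
    (c1 c3 x : ℝ) (hc1 : c1 ∈ Set.Icc (-1 : ℝ) 1) (hc3 : c3 ∈ Set.Icc (-1 : ℝ) 1)
    (hx : c1 + x ∈ Set.Icc (-1 : ℝ) 1) :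
    D (BD c1 (-(c1 * c3)) c3) (BD c1 0 0)
      ≤ D (BD c1 (-(c1 * c3)) c3) (BD (c1 + x) 0 0) := by
  obtain ⟨h1l, h1r⟩ := hc1
  obtain ⟨h3l, h3r⟩ := hc3
  obtain ⟨hxl, hxr⟩ := hx
  set s : ℝ := Real.sqrt ((1+c1)/2) with hs_def
  set t : ℝ := Real.sqrt ((1-c1)/2) with ht_def
  set α : ℂ := (1+(c1:ℂ))/2 with hα_def
  have hs : (s:ℂ) * s = α := by
    rw [hs_def, ← Complex.ofReal_mul, Real.mul_self_sqrt (by linarith), hα_def]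
    push_cast; ring
  have ht : (t:ℂ) * t = 1 - α := by
    rw [ht_def, ← Complex.ofReal_mul, Real.mul_self_sqrt (by linarith), hα_def]
    push_cast; ring
  have h2α : 2*α - 1 = (c1:ℂ) := by rw [hα_def]; ring
  have hval : ∀ a b c : ℝ, (∑ i, Kv s t i * (BD a b c) * (Kv s t i)ᴴ)
      = BD c1 (-(c1*c)) c := by
    intro a b c
    rw [BD_eq_E, BD_eq_E, Kv_apply s t α hs ht, h2α]
    push_cast
    ring_nf
  have hd1 : IsDensityMatrix (BD c1 (-(c1 * c3)) c3) := by
    refine ⟨BD_psd _ _ _ (by nlinarith) (by nlinarith) (by nlinarith) (by nlinarith),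
      BD_trace _ _ _⟩
  have hd2 : IsDensityMatrix (BD (c1 + x) 0 0) := by
    refine ⟨BD_psd _ _ _ (by linarith) (by linarith) (by linarith) (by linarith),
      BD_trace _ _ _⟩
  have key := hD (fun X => ∑ i, Kv s t i * X * (Kv s t i)ᴴ)
    ⟨4, Kv s t, Kv_sum s t α hs ht, fun X => rfl⟩ _ _ hd1 hd2
  rw [hval c1 (-(c1*c3)) c3, hval (c1+x) 0 0] at key
  have e2 : BD c1 (-(c1*(0:ℝ))) 0 = BD c1 0 0 := by norm_num
  rwa [e2] at key
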